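/- Let a₁,...,a_μ, c₁,...,c_ν be positive integers and b₁,...,b_μ, d₁,...,d_ν be any integers. Suppose that for every integer t and every integer x, the number of indices i ∈ {1,...,μ} with x ≡ t·b_i (mod a_i) equals the number of indices j ∈ {1,...,ν} with x ≡ t·d_j (mod c_j). Then μ = ν, and there is a bijection σ : {1,...,μ} → {1,...,ν} such that a_i = c_{σ(i)} and b_i ≡ d_{σ(i)} (mod a_i) for every i. -/

import Mathlib

open scoped BigOperators

lemma card_range_mod (n r N : ℕ) (hn : 0 < n) (hr : r < n) (hN : n ∣ N) :
    ((Finset.range N).filter fun k => k % n = r).card = N / n := by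
  obtain ⟨q, rfl⟩ := hN
  rw [Nat.mul_div_cancel_left _ hn]
  conv_rhs => rw [← Finset.card_range q]
  apply Finset.card_bij' (i := fun k _ => k / n) (j := fun j _ => r + n * j)
  · intro k hk
    simp only [Finset.mem_filter, Finset.mem_range] at hk ⊢
    exact Nat.div_lt_of_lt_mul (by omega)
  · intro j hj
    simp only [Finset.mem_range] at hj
    simp only [Finset.mem_filter, Finset.mem_range]
    refine ⟨?_, by rw [Nat.add_mul_mod_self_left, Nat.mod_eq_of_lt hr]⟩
    calc r + n * j < n + n * j := by omega
      _ = n * (j + 1) := by ring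
      _ ≤ n * q := Nat.mul_le_mul_left n hj
  · intro k hk
    simp only [Finset.mem_filter, Finset.mem_range] at hk
    rw [← hk.2, Nat.mod_add_div k n]
  · intro j hj
    rw [Nat.add_mul_div_left _ _ hn, Nat.div_eq_of_lt hr, zero_add]

lemma countC (a : ℕ) (ha : 0 < a) (A c : ℤ) (N : ℕ)
    (hN : a / (a : ℤ).gcd A ∣ N) :
    (((Finset.range N).filter fun k : ℕ => (a:ℤ) ∣ (k:ℤ) * A + c).card : ℚ) =
      if ((a:ℤ).gcd A : ℤ) ∣ c then (N : ℚ) * ((a:ℤ).gcd A) / a else 0 := by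
  set g : ℕ := (a:ℤ).gcd A with hg
  have hg0 : 0 < g := Int.gcd_pos_of_ne_zero_left A (by exact_mod_cast ha.ne')
  have hgA : (g:ℤ) ∣ A := Int.gcd_dvd_right _ _
  have hga : (g:ℤ) ∣ (a:ℤ) := Int.gcd_dvd_left _ _
  have hgan : g ∣ a := by exact_mod_cast hga
  by_cases hc : ((g:ℤ)) ∣ c
  · rw [if_pos hc]
    obtain ⟨a', ha'⟩ := hgan
    obtain ⟨A', hA'⟩ := hgA
    obtain ⟨c', hc'⟩ := hc
    have ha'0 : 0 < a' := by nlinarith [hg0, ha]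
    have hNa' : a' ∣ N := by
      rwa [ha', Nat.mul_div_cancel_left _ hg0] at hN
    -- coprimality
    have hcop : Int.gcd (a' : ℤ) A' = 1 := by
      have := Int.gcd_div_gcd_div_gcd (i := (a:ℤ)) (j := A) (hg ▸ hg0)
      rw [← hg] at this
      rw [show ((a:ℤ) / g) = (a':ℤ) by rw [ha']; push_cast; rw [Int.mul_ediv_cancel_left _ (by exact_mod_cast hg0.ne')],
         show (A / (g:ℤ)) = A' by rw [hA', Int.mul_ediv_cancel_left _ (by exact_mod_cast hg0.ne')]] at this
      exact this
    obtain ⟨u, v, huv⟩ := Int.isCoprime_iff_gcd_eq_one.mpr hcop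
    -- the residue
    set k₀ : ℤ := -(c' * v) with hk₀
    set r : ℕ := (k₀ % (a' : ℤ)).toNat with hrdef
    have hr0 : (r : ℤ) = k₀ % (a' : ℤ) :=
      Int.toNat_of_nonneg (Int.emod_nonneg _ (by exact_mod_cast ha'0.ne'))
    have hrlt : r < a' := by
      have := Int.emod_lt_of_pos k₀ (show (0:ℤ) < a' by exact_mod_cast ha'0)
      omega
    have hcond : ∀ k : ℕ, ((a:ℤ) ∣ (k:ℤ) * A + c) ↔ k % a' = r := by
      intro k
      have e1 : ((a:ℤ) ∣ (k:ℤ) * A + c) ↔ ((a':ℤ) ∣ (k:ℤ) * A' + c') := by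
        rw [hA', hc', show ((a:ℤ)) = (g:ℤ) * (a':ℤ) by exact_mod_cast ha']
        rw [show (k:ℤ) * ((g:ℤ) * A') + (g:ℤ) * c' = (g:ℤ) * ((k:ℤ) * A' + c') by ring]
        exact mul_dvd_mul_iff_left (show (g:ℤ) ≠ 0 by exact_mod_cast hg0.ne')
      have e2 : ((a':ℤ) ∣ (k:ℤ) * A' + c') ↔ ((a':ℤ) ∣ (k:ℤ) - k₀) := by
        constructor
        · intro hd
          have h3 : (a':ℤ) ∣ ((k:ℤ) * A' + c') * v := hd.mul_right v
          have h4 : ((k:ℤ) * A' + c') * v = ((k:ℤ) - k₀) + (k:ℤ) * (v * A' - 1) + c' * v + k₀ := by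
            ring
          have h5 : (a':ℤ) ∣ (k:ℤ) * (v * A' - 1) := by
            have h5' : (a':ℤ) ∣ (v * A' - 1) := by
              have : v * A' - 1 = -(u * a') := by linarith [huv]
              rw [this]
              exact (dvd_mul_left _ _).neg_right
            exact Dvd.dvd.mul_left h5' k
          have h6 : c' * v + k₀ = 0 := by rw [hk₀]; ring
          rw [h4] at h3
          rw [show ((k:ℤ) - k₀) + (k:ℤ) * (v * A' - 1) + c' * v + k₀
              = ((k:ℤ) - k₀) + (k:ℤ) * (v * A' - 1) + (c' * v + k₀) by ring, h6, add_zero] at h3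
          exact (dvd_add_right h5).mp (by rwa [add_comm] at h3)
        · intro hd
          obtain ⟨m, hm⟩ := hd
          have : (k:ℤ) = k₀ + a' * m := by linarith
          rw [this, hk₀]
          have : (-(c' * v) + (a':ℤ) * m) * A' + c' = c' * (1 - v * A') + (a':ℤ) * (m * A') := by ring
          rw [this]
          have h7 : 1 - v * A' = u * a' := by linarith [huv]
          rw [h7]
          exact dvd_add ⟨c' * u, by ring⟩ ⟨m * A', by ring⟩
      have e3 : ((a':ℤ) ∣ (k:ℤ) - k₀) ↔ k % a' = r := by
        rw [← Int.modEq_iff_dvd]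
        show k₀ % (a':ℤ) = (k:ℤ) % (a':ℤ) ↔ _
        rw [← hr0]
        omega
      rw [e1, e2, e3]
    rw [Finset.filter_congr (fun k _ => by rw [hcond k])]
    rw [card_range_mod a' r N ha'0 hrlt hNa']
    rw [Nat.cast_div hNa' (by exact_mod_cast ha'0.ne')]
    rw [ha']
    push_cast
    rw [mul_comm (g:ℚ) (a':ℚ)]
    field_simp
  · rw [if_neg hc]
    have hemp : (Finset.range N).filter (fun k : ℕ => (a:ℤ) ∣ (k:ℤ) * A + c) = ∅ := by
      apply Finset.filter_false_of_mem
      intro k _ hdvd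
      have h1 : (g:ℤ) ∣ (k:ℤ) * A + c := dvd_trans hga hdvd
      have h2 : (g:ℤ) ∣ (k:ℤ) * A := Dvd.dvd.mul_left hgA k
      exact hc ((dvd_add_right h2).mp h1)
    rw [hemp]
    simp

lemma per_prog (a A L : ℕ) (ha : 0 < a) (hA : 0 < A) (m : ℤ) (haL : a ∣ L) (hAL : A ∣ L) :
    ∑ t ∈ Finset.range L, ∑ k ∈ Finset.range (L / A),
      (if (a:ℤ) ∣ (k:ℤ) * (A:ℤ) + (t:ℤ) * m then (1:ℚ) else 0)
      = (L:ℚ) * L * (Int.gcd (Nat.gcd a A : ℤ) m) / ((A:ℚ) * a) := by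
  set g : ℕ := Nat.gcd a A with hgdef
  have hg0 : 0 < g := Nat.gcd_pos_of_pos_left A ha
  have hga : g ∣ a := Nat.gcd_dvd_left a A
  set G : ℕ := Int.gcd (g : ℤ) m with hGdef
  have hGg : G ∣ g := by
    have : (G:ℤ) ∣ (g:ℤ) := Int.gcd_dvd_left _ _
    exact_mod_cast this
  -- inner sum
  have hN1 : a / (a:ℤ).gcd (A:ℤ) ∣ L / A := by
    rw [Int.gcd_natCast_natCast, ← hgdef]
    rw [Nat.dvd_div_iff_mul_dvd hAL]
    have hlcm : A * (a / g) = Nat.lcm A a := by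
      rw [Nat.lcm, Nat.gcd_comm A a, ← hgdef, Nat.mul_div_assoc A hga]
    rw [hlcm]
    exact Nat.lcm_dvd hAL haL
  have inner : ∀ t : ℕ, ∑ k ∈ Finset.range (L / A),
      (if (a:ℤ) ∣ (k:ℤ) * (A:ℤ) + (t:ℤ) * m then (1:ℚ) else 0)
      = if ((g:ℤ)) ∣ (t:ℤ) * m then ((L / A : ℕ) : ℚ) * g / a else 0 := by
    intro t
    rw [Finset.sum_boole]
    have := countC a ha (A:ℤ) ((t:ℤ) * m) (L / A) hN1
    rw [this, Int.gcd_natCast_natCast, ← hgdef]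
  rw [Finset.sum_congr rfl (fun t _ => inner t)]
  -- outer sum
  have houter : ∑ t ∈ Finset.range L,
      (if ((g:ℤ)) ∣ (t:ℤ) * m then ((L / A : ℕ) : ℚ) * g / a else 0)
      = (((L / A : ℕ) : ℚ) * g / a) * ((L:ℚ) * G / g) := by
    have hstep : ∀ t : ℕ, (if ((g:ℤ)) ∣ (t:ℤ) * m then ((L / A : ℕ) : ℚ) * g / a else 0)
        = (((L / A : ℕ) : ℚ) * g / a) * (if ((g:ℤ)) ∣ (t:ℤ) * m + 0 then (1:ℚ) else 0) := by
      intro t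
      rw [add_zero]
      by_cases hp : ((g:ℤ)) ∣ (t:ℤ) * m
      · rw [if_pos hp, if_pos hp, mul_one]
      · rw [if_neg hp, if_neg hp, mul_zero]
    rw [Finset.sum_congr rfl (fun t _ => hstep t), ← Finset.mul_sum]
    congr 1
    rw [Finset.sum_boole]
    have hN2 : g / (g:ℤ).gcd m ∣ L := by
      rw [← hGdef]
      exact dvd_trans (Nat.div_dvd_of_dvd hGg) (dvd_trans hga haL)
    have := countC g hg0 m 0 L hN2
    rw [this, if_pos (dvd_zero _), ← hGdef]
  rw [houter]
  have hLA : ((L / A : ℕ) : ℚ) = (L:ℚ) / A := by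
    rw [Nat.cast_div hAL (by exact_mod_cast hA.ne')]
  rw [hLA]
  have hg0' : (g:ℚ) ≠ 0 := by exact_mod_cast hg0.ne'
  have ha0' : (a:ℚ) ≠ 0 := by exact_mod_cast ha.ne'
  have hA0' : (A:ℚ) ≠ 0 := by exact_mod_cast hA.ne'
  field_simp

lemma gcd_totient (n : ℕ) (hn : 0 < n) (m : ℤ) :
    ((Int.gcd (n:ℤ) m : ℕ) : ℚ)
      = ∑ e ∈ n.divisors, (Nat.totient e : ℚ) * (if (e:ℤ) ∣ m then 1 else 0) := by
  have h1 : ∑ e ∈ n.divisors, (Nat.totient e : ℚ) * (if (e:ℤ) ∣ m then 1 else 0)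
      = ∑ e ∈ n.divisors.filter (fun e : ℕ => (e:ℤ) ∣ m), (Nat.totient e : ℚ) := by
    rw [Finset.sum_filter]
    apply Finset.sum_congr rfl
    intro e _
    by_cases hp : (e:ℤ) ∣ m
    · rw [if_pos hp, if_pos hp, mul_one]
    · rw [if_neg hp, if_neg hp, mul_zero]
  rw [h1]
  have h2 : n.divisors.filter (fun e : ℕ => (e:ℤ) ∣ m) = (Int.gcd (n:ℤ) m).divisors := by
    have hgd : Int.gcd (n:ℤ) m ∣ n := by
      have : (Int.gcd (n:ℤ) m : ℤ) ∣ (n:ℤ) := Int.gcd_dvd_left _ _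
      exact_mod_cast this
    rw [← Nat.divisors_filter_dvd_of_dvd hn.ne' hgd]
    apply Finset.filter_congr
    intro e he
    rw [Nat.mem_divisors] at he
    constructor
    · intro hem
      exact Nat.dvd_gcd (by exact_mod_cast (Int.natCast_dvd_natCast.mpr he.1)) (by
        rw [Int.natCast_dvd] at hem; exact hem)
    · intro heg
      have : e ∣ m.natAbs := dvd_trans heg (Nat.gcd_dvd_right _ _)
      rw [Int.natCast_dvd]
      exact this
  rw [h2]
  rw [← Nat.cast_sum]
  norm_cast
  exact (Nat.sum_totient _).symm

noncomputable def Esum {n : ℕ} (a : Fin n → ℕ) (b : Fin n → ℤ) (A : ℕ) (B : ℤ) : ℚ :=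
  ∑ i, if A ∣ a i ∧ (A:ℤ) ∣ b i - B then ((a i : ℚ))⁻¹ else 0

lemma side_eval (n : ℕ) (a : Fin n → ℕ) (ha : ∀ i, 0 < a i) (b : Fin n → ℤ)
    (A L : ℕ) (hA : 0 < A) (hL : 0 < L) (haL : ∀ i, a i ∣ L) (hAL : A ∣ L) (B : ℤ) :
    ∑ t ∈ Finset.range L, ∑ k ∈ Finset.range (L / A),
      ((Finset.univ.filter fun i : Fin n =>
          (a i : ℤ) ∣ ((t:ℤ) * B + (k:ℤ) * (A:ℤ)) - (t:ℤ) * b i).card : ℚ)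
      = (L:ℚ) * L / A * ∑ e ∈ A.divisors, (Nat.totient e : ℚ) * Esum a b e B := by
  -- card to sum over i, and push everything to a triple sum over i, t, k
  have step1 : ∀ (t k : ℕ),
      ((Finset.univ.filter fun i : Fin n =>
          (a i : ℤ) ∣ ((t:ℤ) * B + (k:ℤ) * (A:ℤ)) - (t:ℤ) * b i).card : ℚ)
      = ∑ i : Fin n, (if (a i : ℤ) ∣ (k:ℤ) * (A:ℤ) + (t:ℤ) * (B - b i) then (1:ℚ) else 0) := by
    intro t k
    rw [Finset.card_filter]
    push_cast
    apply Finset.sum_congr rfl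
    intro i _
    congr 1
    congr 1
    ring
  rw [Finset.sum_congr rfl fun t _ => Finset.sum_congr rfl fun k _ => step1 t k]
  -- swap sums to bring i outside
  rw [Finset.sum_congr rfl fun t (_ : t ∈ Finset.range L) => Finset.sum_comm, Finset.sum_comm]
  -- evaluate the inner double sum per i
  rw [Finset.sum_congr rfl fun i (_ : i ∈ Finset.univ) =>
    per_prog (a i) A L (ha i) hA (B - b i) (haL i) hAL]
  have hA0 : (A:ℚ) ≠ 0 := by exact_mod_cast hA.ne'
  have hper : ∀ i : Fin n, (L:ℚ) * L * (Int.gcd (Nat.gcd (a i) A : ℤ) (B - b i)) / ((A:ℚ) * a i)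
      = ∑ e ∈ A.divisors, (L:ℚ) * L / A *
          ((Nat.totient e : ℚ) * (if e ∣ a i ∧ (e:ℤ) ∣ b i - B then (a i : ℚ)⁻¹ else 0)) := by
    intro i
    have hgpos : 0 < Nat.gcd (a i) A := Nat.gcd_pos_of_pos_left A (ha i)
    have hdiv : (Nat.gcd (a i) A).divisors = A.divisors.filter (fun e => e ∣ a i) := by
      rw [← Nat.divisors_filter_dvd_of_dvd hA.ne' (Nat.gcd_dvd_right (a i) A)]
      apply Finset.filter_congr
      intro e he
      rw [Nat.mem_divisors] at he
      constructor
      · intro h1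
        exact dvd_trans h1 (Nat.gcd_dvd_left _ _)
      · intro h1
        exact Nat.dvd_gcd h1 he.1
    rw [gcd_totient _ hgpos (B - b i), hdiv, Finset.sum_filter]
    rw [show ∀ S : ℚ, (L:ℚ) * L * S / ((A:ℚ) * a i) = S * ((L:ℚ) * L / ((A:ℚ) * a i)) from
      fun S => by ring, Finset.sum_mul]
    apply Finset.sum_congr rfl
    intro e _
    have hai0 : (a i : ℚ) ≠ 0 := by exact_mod_cast (ha i).ne'
    by_cases h1 : e ∣ a i
    · by_cases h2 : (e:ℤ) ∣ b i - B
      · have h2' : (e:ℤ) ∣ B - b i := by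
          obtain ⟨w, hw⟩ := h2; exact ⟨-w, by linarith⟩
        rw [if_pos h1, if_pos h2', if_pos ⟨h1, h2⟩]
        field_simp
      · have h2' : ¬ (e:ℤ) ∣ B - b i := fun hcon => h2 (by
          obtain ⟨w, hw⟩ := hcon; exact ⟨-w, by linarith⟩)
        rw [if_pos h1, if_neg h2', if_neg (fun hcon => h2 hcon.2)]
        simp
    · rw [if_neg h1, if_neg (fun hcon => h1 hcon.1)]
      simp
  rw [Finset.sum_congr rfl fun i (_ : i ∈ Finset.univ) => hper i]
  rw [Finset.sum_comm]
  unfold Esum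
  rw [Finset.mul_sum]
  apply Finset.sum_congr rfl
  intro e _
  rw [Finset.mul_sum, Finset.mul_sum]

lemma mobius_step (E1 E2 : ℕ → ℤ → ℚ)
    (hkey : ∀ A : ℕ, 0 < A → ∀ B : ℤ,
      ∑ e ∈ A.divisors, (Nat.totient e : ℚ) * E1 e B
        = ∑ e ∈ A.divisors, (Nat.totient e : ℚ) * E2 e B) :
    ∀ A : ℕ, 0 < A → ∀ B : ℤ, E1 A B = E2 A B := by
  intro A
  induction A using Nat.strong_induction_on with
  | _ A ih =>
    intro hA B
    have hmem : A ∈ A.divisors := Nat.mem_divisors_self A hA.ne'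
    have hsplit : ∀ E : ℕ → ℤ → ℚ,
        ∑ e ∈ A.divisors, (Nat.totient e : ℚ) * E e B
          = (Nat.totient A : ℚ) * E A B
            + ∑ e ∈ A.divisors.erase A, (Nat.totient e : ℚ) * E e B := by
      intro E
      exact (Finset.add_sum_erase _ _ hmem).symm
    have hrest : ∑ e ∈ A.divisors.erase A, (Nat.totient e : ℚ) * E1 e B
        = ∑ e ∈ A.divisors.erase A, (Nat.totient e : ℚ) * E2 e B := by
      apply Finset.sum_congr rfl
      intro e he
      have he' := Finset.mem_of_mem_erase he
      rw [Nat.mem_divisors] at he'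
      have hne : e ≠ A := Finset.ne_of_mem_erase he
      have hepos : 0 < e := Nat.pos_of_dvd_of_pos he'.1 hA
      have helt : e < A := Nat.lt_of_le_of_ne (Nat.le_of_dvd hA he'.1) hne
      rw [ih e helt hepos B]
    have := hkey A hA B
    rw [hsplit E1, hsplit E2, hrest] at this
    have htot : (Nat.totient A : ℚ) ≠ 0 := by
      exact_mod_cast (Nat.totient_pos.mpr hA).ne'
    exact mul_left_cancel₀ htot (by linarith)

lemma esum_eq (μ ν : ℕ) (a : Fin μ → ℕ) (c : Fin ν → ℕ)
    (ha : ∀ i, 0 < a i) (hc : ∀ j, 0 < c j) (b : Fin μ → ℤ) (d : Fin ν → ℤ)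
    (h : ∀ t x : ℤ,
      (Finset.univ.filter fun i : Fin μ => (a i : ℤ) ∣ x - t * b i).card =
      (Finset.univ.filter fun j : Fin ν => (c j : ℤ) ∣ x - t * d j).card) :
    ∀ A : ℕ, 0 < A → ∀ B : ℤ, Esum a b A B = Esum c d A B := by
  apply mobius_step
  intro A hA B
  set L : ℕ := A * ((∏ i, a i) * (∏ j, c j)) with hLdef
  have hL : 0 < L := by
    apply Nat.mul_pos hA
    exact Nat.mul_pos (Finset.prod_pos fun i _ => ha i) (Finset.prod_pos fun j _ => hc j)
  have haL : ∀ i, a i ∣ L := fun i =>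
    Dvd.dvd.mul_left (dvd_mul_of_dvd_left (Finset.dvd_prod_of_mem a (Finset.mem_univ i)) _) A
  have hcL : ∀ j, c j ∣ L := fun j =>
    Dvd.dvd.mul_left (dvd_mul_of_dvd_right (Finset.dvd_prod_of_mem c (Finset.mem_univ j)) _) A
  have hAL : A ∣ L := Dvd.intro _ rfl
  have h2 := side_eval μ a ha b A L hA hL haL hAL B
  have h3 := side_eval ν c hc d A L hA hL hcL hAL B
  have hS : ∑ t ∈ Finset.range L, ∑ k ∈ Finset.range (L / A),
      ((Finset.univ.filter fun i : Fin μ =>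
          (a i : ℤ) ∣ ((t:ℤ) * B + (k:ℤ) * (A:ℤ)) - (t:ℤ) * b i).card : ℚ)
      = ∑ t ∈ Finset.range L, ∑ k ∈ Finset.range (L / A),
      ((Finset.univ.filter fun j : Fin ν =>
          (c j : ℤ) ∣ ((t:ℤ) * B + (k:ℤ) * (A:ℤ)) - (t:ℤ) * d j).card : ℚ) := by
    apply Finset.sum_congr rfl
    intro t _
    apply Finset.sum_congr rfl
    intro k _
    exact_mod_cast congrArg (fun z : ℕ => (z:ℚ)) (h (t:ℤ) ((t:ℤ) * B + (k:ℤ) * (A:ℤ)))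
  rw [h2, h3] at hS
  have hfac : (L:ℚ) * L / A ≠ 0 := by
    have hL0 : (L:ℚ) ≠ 0 := by exact_mod_cast hL.ne'
    have hA0 : (A:ℚ) ≠ 0 := by exact_mod_cast hA.ne'
    positivity
  exact mul_left_cancel₀ hfac hS

lemma Esum_pos {n : ℕ} (a : Fin n → ℕ) (ha : ∀ i, 0 < a i) (b : Fin n → ℤ) (A : ℕ) (B : ℤ)
    (i : Fin n) (h1 : A ∣ a i) (h2 : (A:ℤ) ∣ b i - B) : 0 < Esum a b A B := by
  apply Finset.sum_pos'
  · intro k _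
    by_cases hk : A ∣ a k ∧ (A:ℤ) ∣ b k - B
    · rw [if_pos hk]; positivity
    · rw [if_neg hk]
  · refine ⟨i, Finset.mem_univ i, ?_⟩
    rw [if_pos ⟨h1, h2⟩]
    have := ha i
    positivity

lemma Esum_exists {n : ℕ} (a : Fin n → ℕ) (b : Fin n → ℤ) (A : ℕ) (B : ℤ)
    (h : 0 < Esum a b A B) : ∃ i, A ∣ a i ∧ (A:ℤ) ∣ b i - B := by
  by_contra hcon
  push_neg at hcon
  have : Esum a b A B = 0 := by
    apply Finset.sum_eq_zero
    intro k _
    rw [if_neg]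
    intro ⟨hk1, hk2⟩
    exact absurd hk2 (hcon k hk1)
  rw [this] at h
  exact lt_irrefl 0 h

lemma card_filter_succAbove {n : ℕ} (p : Fin (n+1) → Prop) [DecidablePred p] (i0 : Fin (n+1)) :
    (Finset.univ.filter p).card
      = (if p i0 then 1 else 0)
        + (Finset.univ.filter fun k : Fin n => p (i0.succAbove k)).card := by
  rw [Finset.card_filter, Finset.card_filter, Fin.sum_univ_succAbove _ i0]

lemma main_aux (μ : ℕ) : ∀ (ν : ℕ) (a : Fin μ → ℕ) (c : Fin ν → ℕ),
    (∀ i, 0 < a i) → (∀ j, 0 < c j) → ∀ (b : Fin μ → ℤ) (d : Fin ν → ℤ),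
    (∀ t x : ℤ,
      (Finset.univ.filter fun i : Fin μ => (a i : ℤ) ∣ x - t * b i).card =
      (Finset.univ.filter fun j : Fin ν => (c j : ℤ) ∣ x - t * d j).card) →
    μ = ν ∧ ∃ σ : Fin μ ≃ Fin ν, ∀ i, a i = c (σ i) ∧ (a i : ℤ) ∣ b i - d (σ i) := by
  induction μ with
  | zero =>
    intro ν a c ha hc b d h
    have hν : ν = 0 := by
      by_contra hν
      have hj : Fin ν := ⟨0, Nat.pos_of_ne_zero hν⟩
      have hcard := h 1 (d hj)
      have h0 : (Finset.univ.filter fun i : Fin 0 => ((a i):ℤ) ∣ (d hj) - 1 * b i).card = 0 := by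
        simp
      have hmem : hj ∈ Finset.univ.filter fun j : Fin ν => ((c j):ℤ) ∣ (d hj) - 1 * d j := by
        rw [Finset.mem_filter]
        exact ⟨Finset.mem_univ _, by simp⟩
      have h1 : 0 < (Finset.univ.filter fun j : Fin ν => ((c j):ℤ) ∣ (d hj) - 1 * d j).card :=
        Finset.card_pos.mpr ⟨hj, hmem⟩
      omega
    subst hν
    exact ⟨rfl, Equiv.refl _, fun i => i.elim0⟩
  | succ μ' IH =>
    intro ν a c ha hc b d h
    have hE := esum_eq _ _ a c ha hc b d h
    -- ν ≠ 0
    have hν : ν ≠ 0 := by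
      intro hν
      subst hν
      have hcard := h 1 (b 0)
      have h0 : (Finset.univ.filter fun j : Fin 0 => ((c j):ℤ) ∣ (b 0) - 1 * d j).card = 0 := by
        simp
      have hmem : (0 : Fin (μ'+1)) ∈ Finset.univ.filter
          fun i : Fin (μ'+1) => ((a i):ℤ) ∣ (b 0) - 1 * b i := by
        rw [Finset.mem_filter]
        exact ⟨Finset.mem_univ _, by simp⟩
      have h1 : 0 < (Finset.univ.filter
          fun i : Fin (μ'+1) => ((a i):ℤ) ∣ (b 0) - 1 * b i).card :=
        Finset.card_pos.mpr ⟨0, hmem⟩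
      omega
    obtain ⟨ν', rfl⟩ := Nat.exists_eq_succ_of_ne_zero hν
    -- maxima
    obtain ⟨i0, _, hi0⟩ := Finset.exists_max_image Finset.univ a ⟨0, Finset.mem_univ 0⟩
    obtain ⟨j1, _, hj1⟩ := Finset.exists_max_image Finset.univ c ⟨0, Finset.mem_univ 0⟩
    -- all c j ≤ a i0
    have hcmax : ∀ j, c j ≤ a i0 := by
      intro j
      have hpos : 0 < Esum c d (c j1) (d j1) :=
        Esum_pos c hc d (c j1) (d j1) j1 dvd_rfl (by simp)
      rw [← hE (c j1) (hc j1) (d j1)] at hpos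
      obtain ⟨i, hi, _⟩ := Esum_exists a b (c j1) (d j1) hpos
      calc c j ≤ c j1 := hj1 j (Finset.mem_univ j)
        _ ≤ a i := Nat.le_of_dvd (ha i) hi
        _ ≤ a i0 := hi0 i (Finset.mem_univ i)
    -- find j0 matching i0
    have hpos2 : 0 < Esum c d (a i0) (b i0) := by
      rw [← hE (a i0) (ha i0) (b i0)]
      exact Esum_pos a ha b (a i0) (b i0) i0 dvd_rfl (by simp)
    obtain ⟨j0, hj0d, hj0m⟩ := Esum_exists c d (a i0) (b i0) hpos2
    have hac : a i0 = c j0 :=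
      le_antisymm (Nat.le_of_dvd (hc j0) hj0d) (hcmax j0)
    have hbd : (a i0 : ℤ) ∣ b i0 - d j0 := by
      obtain ⟨w, hw⟩ := hj0m
      exact ⟨-w, by linarith⟩
    -- reduced system
    have h' : ∀ t x : ℤ,
        (Finset.univ.filter fun k : Fin μ' =>
          ((a (i0.succAbove k)) : ℤ) ∣ x - t * b (i0.succAbove k)).card =
        (Finset.univ.filter fun k : Fin ν' =>
          ((c (j0.succAbove k)) : ℤ) ∣ x - t * d (j0.succAbove k)).card := by
      intro t x
      have hiff : ((a i0 : ℤ) ∣ x - t * b i0) ↔ ((c j0 : ℤ) ∣ x - t * d j0) := by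
        rw [← hac]
        have hmul : (a i0 : ℤ) ∣ t * (b i0 - d j0) := Dvd.dvd.mul_left hbd t
        constructor
        · intro hh
          have h3 := dvd_add hh hmul
          rwa [show (x - t * b i0) + t * (b i0 - d j0) = x - t * d j0 by ring] at h3
        · intro hh
          have h3 := dvd_sub hh hmul
          rwa [show (x - t * d j0) - t * (b i0 - d j0) = x - t * b i0 by ring] at h3
      have hL := card_filter_succAbove (fun i : Fin (μ'+1) => (a i : ℤ) ∣ x - t * b i) i0
      have hR := card_filter_succAbove (fun j : Fin (ν'+1) => (c j : ℤ) ∣ x - t * d j) j0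
      have hite : (if (a i0 : ℤ) ∣ x - t * b i0 then 1 else 0)
          = (if (c j0 : ℤ) ∣ x - t * d j0 then 1 else 0) := by
        simp only [hiff]
      have hh := h t x
      rw [hL, hR, hite] at hh
      omega
    obtain ⟨hμν, σ', hσ'⟩ := IH ν' (fun k => a (i0.succAbove k)) (fun k => c (j0.succAbove k))
      (fun k => ha _) (fun k => hc _) (fun k => b (i0.succAbove k)) (fun k => d (j0.succAbove k)) h'
    refine ⟨by omega, ?_⟩
    refine ⟨(finSuccEquiv' i0).trans ((Equiv.optionCongr σ').trans (finSuccEquiv' j0).symm), ?_⟩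
    intro i
    by_cases hi : i = i0
    · have hs : ((finSuccEquiv' i0).trans ((Equiv.optionCongr σ').trans (finSuccEquiv' j0).symm)) i = j0 := by
        rw [hi]
        simp [finSuccEquiv'_at, finSuccEquiv'_symm_none]
      rw [hs, hi]
      exact ⟨hac, hbd⟩
    · obtain ⟨k, hk⟩ := Fin.exists_succAbove_eq hi
      have hs : ((finSuccEquiv' i0).trans ((Equiv.optionCongr σ').trans (finSuccEquiv' j0).symm)) i
          = j0.succAbove (σ' k) := by
        rw [← hk]
        simp [finSuccEquiv'_succAbove, finSuccEquiv'_symm_some]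
      rw [hs, ← hk]
      exact hσ' k

theorem complementary_AP_systems_pair_off (μ ν : ℕ)
    (a : Fin μ → ℕ) (c : Fin ν → ℕ) (ha : ∀ i, 0 < a i) (hc : ∀ j, 0 < c j)
    (b : Fin μ → ℤ) (d : Fin ν → ℤ)
    (h : ∀ t x : ℤ,
      (Finset.univ.filter fun i : Fin μ => (a i : ℤ) ∣ x - t * b i).card =
      (Finset.univ.filter fun j : Fin ν => (c j : ℤ) ∣ x - t * d j).card) :
    μ = ν ∧ ∃ σ : Fin μ ≃ Fin ν, ∀ i, a i = c (σ i) ∧ (a i : ℤ) ∣ b i - d (σ i) := by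
  exact main_aux μ ν a c ha hc b d h
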